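/- Let (Ω, P) be a probability space, let p ≥ 1, and let X^I : ℤ → Ω → ℝ^{d_I}, X^A : ℤ → Ω → ℝ^{d_A}, X^B : ℤ → Ω → ℝ^{d_B} be square-integrable processes. Let Φ_{j,BA} (d_B×d_A) and Φ_{j,BB} (d_B×d_B) for j = 1, …, p be real matrices, set Φ_BA = ∑_{j=1}^p Φ_{j,BA} and Φ_BB = ∑_{j=1}^p Φ_{j,BB}, and define ε_t = X_t^B − ∑_{j=1}^p Φ_{j,BA} X_{t−j}^A − ∑_{j=1}^p Φ_{j,BB} X_{t−j}^B. Assume: (i) E[ε_t (X_s^I)ᵀ] = 0 for all t, s ∈ ℤ (expectations of matrix products taken entrywise); (ii) there are functions γ_AI, γ_BI : ℤ → Matrix with E[X_t^A (X_{t+k}^I)ᵀ] = γ_AI(k) and E[X_t^B (X_{t+k}^I)ᵀ] = γ_BI(k) for all t, k ∈ ℤ; (iii) γ_AI and γ_BI are summable over ℤ entrywise, and set C_AI = ∑'_{k∈ℤ} γ_AI(k), C_BI = ∑'_{k∈ℤ} γ_BI(k); (iv) I_{d_B} − Φ_BB is invertible; (v) G is a d_I×d_A matrix with C_AI G = I_{d_A}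 (a right inverse of C_AI, which exists since C_AI has full row rank). Then C_BI G = (I_{d_B} − Φ_BB)⁻¹ Φ_BA. -/

import Mathlib

open MeasureTheory Matrix

private lemma l2_mul_integrable {Ω : Type*} [MeasurableSpace Ω] (P : Measure Ω) (f g : Ω → ℝ)
    (hf : MemLp f 2 P) (hg : MemLp g 2 P) : Integrable (fun ω => f ω * g ω) P := by
  have h1 := (hf.add hg).integrable_sq
  have h2 := hf.integrable_sq
  have h3 := hg.integrable_sq
  have h4 := ((h1.sub h2).sub h3).const_mul (1/2 : ℝ)
  have he : (fun ω => f ω * g ω) = fun ω => (1/2 : ℝ) * ((f + g) ω ^ 2 - f ω ^ 2 - g ω ^ 2) := by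
    funext ω; simp only [Pi.add_apply]; ring
  rw [he]; exact h4

private lemma tsum_int_shift (f : ℤ → ℝ) (c : ℤ) : ∑' k : ℤ, f (k + c) = ∑' k, f k := by
  simpa [Function.comp] using (Equiv.addRight c).tsum_eq f

private lemma summable_int_shift {f : ℤ → ℝ} (h : Summable f) (c : ℤ) :
    Summable (fun k : ℤ => f (k + c)) := by
  exact (Equiv.addRight c).summable_iff.mpr h

private lemma summable_fin_sum {ι : Type*} {s : Finset ι} {f : ι → ℤ → ℝ}
    (h : ∀ i ∈ s, Summable (f i)) : Summable fun k => ∑ i ∈ s, f i k :=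
  (hasSum_sum fun i hi => (h i hi).hasSum).summable

/-- Identification theorem for instrumental processes in general stationary time
series: if `X_t^B = ∑_j Φ_{j,BA} X_{t-j}^A + ∑_j Φ_{j,BB} X_{t-j}^B + ε_t` with the
residual `ε` uncorrelated with the instrument process `X^I` at all lags, the
integrated cross-covariances `C_AI, C_BI` exist, `I_{d_B} - Φ_BB` is invertible,
and `G` is a right inverse of `C_AI`, then `C_BI G = (I_{d_B} - Φ_BB)⁻¹ Φ_BA`. -/
theorem general_time_series_instrumental_identification
    {dI dA dB p : ℕ} (hp : 1 ≤ p)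
    {Ω : Type*} [MeasurableSpace Ω] (P : Measure Ω) [IsProbabilityMeasure P]
    (XI : ℤ → Ω → (Fin dI → ℝ)) (XA : ℤ → Ω → (Fin dA → ℝ))
    (XB : ℤ → Ω → (Fin dB → ℝ))
    (hXIL2 : ∀ t i, MemLp (fun ω => XI t ω i) 2 P)
    (hXAL2 : ∀ t i, MemLp (fun ω => XA t ω i) 2 P)
    (hXBL2 : ∀ t i, MemLp (fun ω => XB t ω i) 2 P)
    (ΦBA : Fin p → Matrix (Fin dB) (Fin dA) ℝ)
    (ΦBB : Fin p → Matrix (Fin dB) (Fin dB) ℝ)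
    (ε : ℤ → Ω → (Fin dB → ℝ))
    (hε : ∀ t ω, ε t ω =
      XB t ω - (∑ j : Fin p, (ΦBA j).mulVec (XA (t - ((j : ℕ) + 1)) ω)) -
        ∑ j : Fin p, (ΦBB j).mulVec (XB (t - ((j : ℕ) + 1)) ω))
    (horth : ∀ t s : ℤ, ∀ (i : Fin dB) (l : Fin dI),
      ∫ ω, ε t ω i * XI s ω l ∂P = 0)
    (γAI : ℤ → Matrix (Fin dA) (Fin dI) ℝ)
    (γBI : ℤ → Matrix (Fin dB) (Fin dI) ℝ)
    (hγAI : ∀ t k : ℤ, ∀ (i : Fin dA) (j : Fin dI),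
      ∫ ω, XA t ω i * XI (t + k) ω j ∂P = γAI k i j)
    (hγBI : ∀ t k : ℤ, ∀ (i : Fin dB) (j : Fin dI),
      ∫ ω, XB t ω i * XI (t + k) ω j ∂P = γBI k i j)
    (hsumAI : ∀ (i : Fin dA) (j : Fin dI), Summable fun k : ℤ => γAI k i j)
    (hsumBI : ∀ (i : Fin dB) (j : Fin dI), Summable fun k : ℤ => γBI k i j)
    (CAI : Matrix (Fin dA) (Fin dI) ℝ)
    (hCAI : CAI = Matrix.of fun i j => ∑' k : ℤ, γAI k i j)
    (CBI : Matrix (Fin dB) (Fin dI) ℝ)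
    (hCBI : CBI = Matrix.of fun i j => ∑' k : ℤ, γBI k i j)
    (hBB : IsUnit (1 - ∑ j, ΦBB j).det)
    (G : Matrix (Fin dI) (Fin dA) ℝ)
    (hG : CAI * G = 1) :
    CBI * G = (1 - ∑ j, ΦBB j)⁻¹ * (∑ j, ΦBA j) := by
  -- Step 1: the lag-domain identity for every lag k.
  have key : ∀ (k : ℤ) (i : Fin dB) (l : Fin dI),
      γBI k i l
        = (∑ j : Fin p, ∑ a, ΦBA j i a * γAI (k + ((j : ℕ) + 1)) a l)
        + ∑ j : Fin p, ∑ b, ΦBB j i b * γBI (k + ((j : ℕ) + 1)) b l := by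
    intro k i l
    set t : ℤ := 0 with ht
    set s : ℤ := k with hs
    -- pointwise decomposition
    have hXBpt : ∀ ω, XB t ω i * XI s ω l
        = ε t ω i * XI s ω l
        + (∑ j : Fin p, ∑ a, ΦBA j i a * (XA (t - ((j : ℕ) + 1)) ω a * XI s ω l))
        + ∑ j : Fin p, ∑ b, ΦBB j i b * (XB (t - ((j : ℕ) + 1)) ω b * XI s ω l) := by
      intro ω
      have h := congrFun (hε t ω) i
      simp only [Pi.sub_apply, Finset.sum_apply, Matrix.mulVec, dotProduct] at h
      rw [h]
      simp only [sub_mul, Finset.sum_mul, mul_assoc]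
      ring
    have intAI : ∀ (u : ℤ) (a : Fin dA), Integrable (fun ω => XA u ω a * XI s ω l) P :=
      fun u a => l2_mul_integrable P _ _ (hXAL2 u a) (hXIL2 s l)
    have intBI : ∀ (u : ℤ) (b : Fin dB), Integrable (fun ω => XB u ω b * XI s ω l) P :=
      fun u b => l2_mul_integrable P _ _ (hXBL2 u b) (hXIL2 s l)
    have intA : Integrable
        (fun ω => ∑ j : Fin p, ∑ a, ΦBA j i a * (XA (t - ((j : ℕ) + 1)) ω a * XI s ω l)) P :=
      integrable_finset_sum _ fun j _ => integrable_finset_sum _ fun a _ =>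
        (intAI _ a).const_mul _
    have intB : Integrable
        (fun ω => ∑ j : Fin p, ∑ b, ΦBB j i b * (XB (t - ((j : ℕ) + 1)) ω b * XI s ω l)) P :=
      integrable_finset_sum _ fun j _ => integrable_finset_sum _ fun b _ =>
        (intBI _ b).const_mul _
    have intε : Integrable (fun ω => ε t ω i * XI s ω l) P := by
      have he : (fun ω => ε t ω i * XI s ω l)
          = fun ω => XB t ω i * XI s ω l
            - (∑ j : Fin p, ∑ a, ΦBA j i a * (XA (t - ((j : ℕ) + 1)) ω a * XI s ω l))
            - ∑ j : Fin p, ∑ b, ΦBB j i b * (XB (t - ((j : ℕ) + 1)) ω b * XI s ω l) := by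
        funext ω; have := hXBpt ω; linarith
      rw [he]; exact ((intBI t i).sub intA).sub intB
    have intεA : Integrable (fun ω => ε t ω i * XI s ω l
        + ∑ j : Fin p, ∑ a, ΦBA j i a * (XA (t - ((j : ℕ) + 1)) ω a * XI s ω l)) P :=
      intε.add intA
    have hint : ∫ ω, XB t ω i * XI s ω l ∂P
        = ∫ ω, ε t ω i * XI s ω l ∂P
        + ∫ ω, (∑ j : Fin p, ∑ a, ΦBA j i a * (XA (t - ((j : ℕ) + 1)) ω a * XI s ω l)) ∂P
        + ∫ ω, (∑ j : Fin p, ∑ b, ΦBB j i b * (XB (t - ((j : ℕ) + 1)) ω b * XI s ω l)) ∂P := by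
      rw [integral_congr_ae (Filter.Eventually.of_forall hXBpt),
        integral_add intεA intB, integral_add intε intA]
    have hLHS : ∫ ω, XB t ω i * XI s ω l ∂P = γBI k i l := by
      have := hγBI t (s - t) i l
      rw [show t + (s - t) = s by ring] at this
      rw [this, ht, hs]; norm_num
    have hA : ∫ ω, (∑ j : Fin p, ∑ a, ΦBA j i a * (XA (t - ((j : ℕ) + 1)) ω a * XI s ω l)) ∂P
        = ∑ j : Fin p, ∑ a, ΦBA j i a * γAI (k + ((j : ℕ) + 1)) a l := by
      rw [integral_finset_sum _ fun j _ => integrable_finset_sum _ fun a _ =>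
        (intAI _ a).const_mul _]
      refine Finset.sum_congr rfl fun j _ => ?_
      rw [integral_finset_sum _ fun a _ => (intAI _ a).const_mul _]
      refine Finset.sum_congr rfl fun a _ => ?_
      rw [integral_const_mul]
      congr 1
      have := hγAI (t - ((j : ℕ) + 1)) (k + ((j : ℕ) + 1)) a l
      rw [show (t - ((j : ℕ) + 1)) + (k + ((j : ℕ) + 1)) = s by rw [ht, hs]; ring] at this
      exact this
    have hB : ∫ ω, (∑ j : Fin p, ∑ b, ΦBB j i b * (XB (t - ((j : ℕ) + 1)) ω b * XI s ω l)) ∂P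
        = ∑ j : Fin p, ∑ b, ΦBB j i b * γBI (k + ((j : ℕ) + 1)) b l := by
      rw [integral_finset_sum _ fun j _ => integrable_finset_sum _ fun b _ =>
        (intBI _ b).const_mul _]
      refine Finset.sum_congr rfl fun j _ => ?_
      rw [integral_finset_sum _ fun b _ => (intBI _ b).const_mul _]
      refine Finset.sum_congr rfl fun b _ => ?_
      rw [integral_const_mul]
      congr 1
      have := hγBI (t - ((j : ℕ) + 1)) (k + ((j : ℕ) + 1)) b l
      rw [show (t - ((j : ℕ) + 1)) + (k + ((j : ℕ) + 1)) = s by rw [ht, hs]; ring] at this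
      exact this
    rw [hLHS, horth, hA, hB, zero_add] at hint
    exact hint
  -- Step 2: sum over all lags.
  have hmat : CBI = (∑ j, ΦBA j) * CAI + (∑ j, ΦBB j) * CBI := by
    ext i l
    have hsA : ∀ (j : Fin p), Summable fun k : ℤ =>
        ∑ a, ΦBA j i a * γAI (k + ((j : ℕ) + 1)) a l := fun j =>
      summable_fin_sum fun a _ => (summable_int_shift (hsumAI a l) _).mul_left _
    have hsB : ∀ (j : Fin p), Summable fun k : ℤ =>
        ∑ b, ΦBB j i b * γBI (k + ((j : ℕ) + 1)) b l := fun j =>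
      summable_fin_sum fun b _ => (summable_int_shift (hsumBI b l) _).mul_left _
    have hSA : Summable fun k : ℤ =>
        ∑ j : Fin p, ∑ a, ΦBA j i a * γAI (k + ((j : ℕ) + 1)) a l :=
      summable_fin_sum fun j _ => hsA j
    have hSB : Summable fun k : ℤ =>
        ∑ j : Fin p, ∑ b, ΦBB j i b * γBI (k + ((j : ℕ) + 1)) b l :=
      summable_fin_sum fun j _ => hsB j
    have h1 : ∑' k : ℤ, γBI k i l
        = (∑' k : ℤ, ∑ j : Fin p, ∑ a, ΦBA j i a * γAI (k + ((j : ℕ) + 1)) a l)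
        + ∑' k : ℤ, ∑ j : Fin p, ∑ b, ΦBB j i b * γBI (k + ((j : ℕ) + 1)) b l := by
      rw [← Summable.tsum_add hSA hSB]
      exact tsum_congr fun k => key k i l
    have h2 : (∑' k : ℤ, ∑ j : Fin p, ∑ a, ΦBA j i a * γAI (k + ((j : ℕ) + 1)) a l)
        = ∑ j : Fin p, ∑ a, ΦBA j i a * ∑' k : ℤ, γAI k a l := by
      rw [Summable.tsum_finsetSum fun j _ => hsA j]
      refine Finset.sum_congr rfl fun j _ => ?_
      rw [Summable.tsum_finsetSum fun a _ => (summable_int_shift (hsumAI a l) _).mul_left _]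
      refine Finset.sum_congr rfl fun a _ => ?_
      rw [tsum_mul_left, tsum_int_shift (fun k => γAI k a l)]
    have h3 : (∑' k : ℤ, ∑ j : Fin p, ∑ b, ΦBB j i b * γBI (k + ((j : ℕ) + 1)) b l)
        = ∑ j : Fin p, ∑ b, ΦBB j i b * ∑' k : ℤ, γBI k b l := by
      rw [Summable.tsum_finsetSum fun j _ => hsB j]
      refine Finset.sum_congr rfl fun j _ => ?_
      rw [Summable.tsum_finsetSum fun b _ => (summable_int_shift (hsumBI b l) _).mul_left _]
      refine Finset.sum_congr rfl fun b _ => ?_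
      rw [tsum_mul_left, tsum_int_shift (fun k => γBI k b l)]
    rw [h2, h3] at h1
    simp only [hCAI, hCBI, Matrix.add_apply, Matrix.mul_apply, Matrix.sum_apply,
      Matrix.of_apply, Finset.sum_mul]
    rw [h1]
    exact congrArg₂ (· + ·) Finset.sum_comm Finset.sum_comm
  -- Step 3: matrix algebra.
  have hfinal : (1 - ∑ j, ΦBB j) * CBI = (∑ j, ΦBA j) * CAI := by
    rw [Matrix.sub_mul, Matrix.one_mul, sub_eq_iff_eq_add]
    exact hmat
  have hinv : (1 - ∑ j, ΦBB j)⁻¹ * (1 - ∑ j, ΦBB j) = 1 :=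
    Matrix.nonsing_inv_mul _ hBB
  calc CBI * G = ((1 - ∑ j, ΦBB j)⁻¹ * (1 - ∑ j, ΦBB j)) * (CBI * G) := by
        rw [hinv, Matrix.one_mul]
    _ = (1 - ∑ j, ΦBB j)⁻¹ * (((1 - ∑ j, ΦBB j) * CBI) * G) := by
        rw [Matrix.mul_assoc, Matrix.mul_assoc]
    _ = (1 - ∑ j, ΦBB j)⁻¹ * ((∑ j, ΦBA j) * (CAI * G)) := by
        rw [hfinal, Matrix.mul_assoc]
    _ = (1 - ∑ j, ΦBB j)⁻¹ * (∑ j, ΦBA j) := by rw [hG, Matrix.mul_one]
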